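/- The factorization in the previous statement is unique: if ι(C) = [[I,0],[E₁,I]]·[[I,D],[0,I]]·[[I,0],[E₂,I]]·[[R,0],[0,(R⁻¹)ᵗ]] with E₁, E₂ ∈ o(V) and R ∈ GL(V) all commuting with C and D, then necessarily R = D(I − C⁻¹)⁻¹, E₁ = (1/2)(C+I)(C−I)⁻¹ − D⁻¹, and E₂ = D⁻²((C − C⁻¹)/2 − D). -/

import Mathlib

open Module

private theorem aux_isUnit_of_det_ne_zero {V : Type*} [AddCommGroup V] [Module ℝ V]
    [FiniteDimensional ℝ V] (f : Module.End ℝ V) (hf : LinearMap.det f ≠ 0) : IsUnit f :=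
  ⟨⟨f, (LinearMap.equivOfDetNeZero f hf).symm,
    LinearMap.ext fun x => (LinearMap.equivOfDetNeZero f hf).apply_symm_apply x,
    LinearMap.ext fun x => (LinearMap.equivOfDetNeZero f hf).symm_apply_apply x⟩, rfl⟩

private theorem aux_inv_comm {M₀ : Type*} [MonoidWithZero M₀] {a b : M₀} (ha : IsUnit a)
    (h : a * b = b * a) : Ring.inverse a * b = b * Ring.inverse a := by
  obtain ⟨u, rfl⟩ := ha
  rw [Ring.inverse_unit]
  exact Commute.units_inv_left h

/-- Uniqueness of the factorization
`ι(C) = [[I,0],[E₁,I]]·[[I,D],[0,I]]·[[I,0],[E₂,I]]·[[R,0],[0,(R⁻¹)ᵗ]]`: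
if `E₁, E₂ ∈ o(V)` and `R ∈ GL(V)` all commute with `C` and `D` and satisfy the block
identity, then necessarily `R = D(I − C⁻¹)⁻¹`, `E₁ = (1/2)(C+I)(C−I)⁻¹ − D⁻¹`, and
`E₂ = D⁻²((C − C⁻¹)/2 − D)`. -/
theorem iota_factorization_unique {V : Type*} [AddCommGroup V] [Module ℝ V]
    [FiniteDimensional ℝ V]
    (B : LinearMap.BilinForm ℝ V) (hBsym : ∀ x y, B x y = B y x)
    (hB : B.Nondegenerate)
    (t : Module.End ℝ V → Module.End ℝ V)
    (ht : ∀ (T : Module.End ℝ V) (x y : V), B (t T x) y = B x (T y))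
    (C D : Module.End ℝ V)
    (hCO : ∀ x y, B (C x) (C y) = B x y) (hCdet : LinearMap.det C = 1)
    (hC1 : LinearMap.det (C - 1) ≠ 0)
    (hDskew : ∀ x y, B (D x) y = - B x (D y)) (hD : IsUnit D)
    (hCD : C * D = D * C)
    (E₁ E₂ R : Module.End ℝ V)
    (hE₁ : ∀ x y, B (E₁ x) y = - B x (E₁ y))
    (hE₂ : ∀ x y, B (E₂ x) y = - B x (E₂ y))
    (hR : IsUnit R)
    (hE₁C : E₁ * C = C * E₁) (hE₁D : E₁ * D = D * E₁)
    (hE₂C : E₂ * C = C * E₂) (hE₂D : E₂ * D = D * E₂)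
    (hRC : R * C = C * R) (hRD : R * D = D * R)
    (hfact :
      (!![(1 / 2 : ℝ) • (C + 1), C - 1; (1 / 4 : ℝ) • (C - 1), (1 / 2 : ℝ) • (C + 1)]
          : Matrix (Fin 2) (Fin 2) (Module.End ℝ V)) =
        !![1, 0; E₁, 1] * !![1, D; 0, 1] * !![1, 0; E₂, 1] *
          !![R, 0; 0, t (Ring.inverse R)]) :
    R = D * Ring.inverse (1 - Ring.inverse C) ∧
    E₁ = (1 / 2 : ℝ) • ((C + 1) * Ring.inverse (C - 1)) - Ring.inverse D ∧
    E₂ = Ring.inverse (D * D) * ((1 / 2 : ℝ) • (C - Ring.inverse C) - D) := by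
  classical
  set X := t (Ring.inverse R) with hXdef
  -- extract the entries of the block identity
  simp only [Matrix.mul_fin_two, one_mul, mul_one, zero_mul, mul_zero, add_zero,
    zero_add] at hfact
  have he := Matrix.ext_iff.mpr hfact
  have h00 := he 0 0
  have h01 := he 0 1
  have h11 := he 1 1
  simp only [Matrix.cons_val', Matrix.cons_val_zero, Matrix.cons_val_one, Matrix.head_cons,
    Matrix.empty_val', Matrix.cons_val_fin_one, Matrix.head_fin_const,
    Matrix.of_apply] at h00 h01 h11
  -- units and inverses
  have hCu : IsUnit C := aux_isUnit_of_det_ne_zero C (by rw [hCdet]; exact one_ne_zero)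
  have hC1u : IsUnit (C - 1) := aux_isUnit_of_det_ne_zero _ hC1
  set Ci := Ring.inverse C with hCidef
  set Di := Ring.inverse D with hDidef
  set K := Ring.inverse (C - 1) with hKdef
  have hCCi : C * Ci = 1 := Ring.mul_inverse_cancel _ hCu
  have hCiC : Ci * C = 1 := Ring.inverse_mul_cancel _ hCu
  have hDDi : D * Di = 1 := Ring.mul_inverse_cancel _ hD
  have hDiD : Di * D = 1 := Ring.inverse_mul_cancel _ hD
  have hKK : (C - 1) * K = 1 := Ring.mul_inverse_cancel _ hC1u
  have hCiu : IsUnit Ci := ⟨⟨Ci, C, hCiC, hCCi⟩, rfl⟩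
  -- 1 - Ci is a unit
  have h1Ci : (1 : Module.End ℝ V) - Ci = Ci * (C - 1) := by
    rw [mul_sub, hCiC, mul_one]
  have hU : IsUnit ((1 : Module.End ℝ V) - Ci) := by
    rw [h1Ci]; exact hCiu.mul hC1u
  set Q := Ring.inverse ((1 : Module.End ℝ V) - Ci) with hQdef
  have hQU : (1 - Ci) * Q = 1 := Ring.mul_inverse_cancel _ hU
  -- extensionality from nondegeneracy
  have ext2 : ∀ A A' : Module.End ℝ V, (∀ x y, B x (A y) = B x (A' y)) → A = A' := by
    intro A A' h
    ext y
    have h0 : ∀ x, B (A y - A' y) x = 0 := by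
      intro x
      rw [map_sub, LinearMap.sub_apply, hBsym (A y) x, hBsym (A' y) x, h x y, sub_self]
    exact sub_eq_zero.mp (hB.1 _ h0)
  -- pointwise cancellation
  have hCCi' : ∀ v, C (Ci v) = v := fun v => by
    rw [← Module.End.mul_apply, hCCi, Module.End.one_apply]
  have hDDi' : ∀ v, D (Di v) = v := fun v => by
    rw [← Module.End.mul_apply, hDDi, Module.End.one_apply]
  -- adjoint facts
  have adjC : ∀ x y, B (C x) y = B x (Ci y) := by
    intro x y
    calc B (C x) y = B (C x) (C (Ci y)) := by rw [hCCi']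
      _ = B x (Ci y) := hCO x (Ci y)
  have skewDi : ∀ x y, B (Di x) y = - B x (Di y) := by
    intro x y
    have h := hDskew (Di x) (Di y)
    rw [hDDi' x, hDDi' y] at h
    linarith
  -- X = Di * (C - 1)
  have hXval : X = Di * (C - 1) := by
    have h : Di * (D * X) = Di * (C - 1) := by rw [← h01]
    rwa [← mul_assoc, hDiD, one_mul] at h
  -- Ring.inverse R = (1 - Ci) * Di
  have hRinv : Ring.inverse R = (1 - Ci) * Di := by
    apply ext2
    intro x y
    rw [← ht (Ring.inverse R) x y]
    show B (X x) y = B x (((1 - Ci) * Di) y)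
    rw [hXval, Module.End.mul_apply, skewDi]
    simp only [LinearMap.sub_apply, Module.End.one_apply, Module.End.mul_apply, map_sub,
      LinearMap.sub_apply]
    rw [adjC]
    ring
  -- first conclusion
  have hRRi : R * ((1 - Ci) * Di) = 1 := by
    rw [← hRinv]; exact Ring.mul_inverse_cancel _ hR
  have goal1 : R = D * Q := by
    have e1 : ((1 - Ci) * Di) * (D * Q) = 1 := by
      rw [mul_assoc (1 - Ci) Di (D * Q), ← mul_assoc Di D Q, hDiD, one_mul, hQU]
    calc R = R * (((1 - Ci) * Di) * (D * Q)) := by rw [e1, mul_one]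
      _ = (R * ((1 - Ci) * Di)) * (D * Q) := (mul_assoc _ _ _).symm
      _ = D * Q := by rw [hRRi, one_mul]
  -- second conclusion
  have goal2 : E₁ = (1 / 2 : ℝ) • ((C + 1) * K) - Di := by
    have e2 : (E₁ * D + 1) * Di = (1 / 2 : ℝ) • (C + 1) * K := by
      have h := congrArg (· * K) h11
      simp only [hXval] at h
      rw [mul_assoc (E₁ * D + 1) (Di * (C - 1)) K, mul_assoc Di (C - 1) K, hKK, mul_one] at h
      exact h.symm
    have e3 : E₁ * D + 1 = (1 / 2 : ℝ) • (C + 1) * K * D := by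
      have h := congrArg (· * D) e2
      rwa [mul_assoc (E₁ * D + 1) Di D, hDiD, mul_one] at h
    have e4 : E₁ * D = (1 / 2 : ℝ) • (C + 1) * K * D - 1 := by
      rw [← e3, add_sub_cancel_right]
    have e5 : E₁ = ((1 / 2 : ℝ) • (C + 1) * K * D - 1) * Di := by
      have h := congrArg (· * Di) e4
      rwa [mul_assoc E₁ D Di, hDDi, mul_one] at h
    rw [e5, sub_mul, one_mul, mul_assoc ((1 / 2 : ℝ) • (C + 1) * K) D Di, hDDi, mul_one,
      smul_mul_assoc]
  -- third conclusion
  have hDiC : Di * C = C * Di := aux_inv_comm hD hCD.symm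
  have hCiD : Ci * D = D * Ci := aux_inv_comm hCu hCD
  have hDiCi : Di * Ci = Ci * Di := aux_inv_comm hD hCiD.symm
  have hDDu : IsUnit (D * D) := hD.mul hD
  have hDD : Ring.inverse (D * D) = Di * Di := by
    have e1 : (D * D) * (Di * Di) = 1 := by
      rw [mul_assoc D D (Di * Di), ← mul_assoc D Di Di, hDDi, one_mul, hDDi]
    calc Ring.inverse (D * D) = Ring.inverse (D * D) * ((D * D) * (Di * Di)) := by
          rw [e1, mul_one]
      _ = (Ring.inverse (D * D) * (D * D)) * (Di * Di) := (mul_assoc _ _ _).symm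
      _ = Di * Di := by rw [Ring.inverse_mul_cancel _ hDDu, one_mul]
  have goal3 : E₂ = Ring.inverse (D * D) * ((1 / 2 : ℝ) • (C - Ci) - D) := by
    -- from h00 : (1/2)•(C+1) = (1 + D*E₂)*R
    have e6 : 1 + D * E₂ = (1 / 2 : ℝ) • (C + 1) * ((1 - Ci) * Di) := by
      have h := congrArg (· * ((1 - Ci) * Di)) h00
      have hRr : R * ((1 - Ci) * Di) = 1 := hRRi
      rw [mul_assoc (1 + D * E₂) R ((1 - Ci) * Di), hRr, mul_one] at h
      exact h.symm
    have e7 : D * E₂ = (1 / 2 : ℝ) • (C + 1) * ((1 - Ci) * Di) - 1 := by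
      rw [← e6, add_sub_cancel_left]
    have e8 : E₂ = Di * ((1 / 2 : ℝ) • (C + 1) * ((1 - Ci) * Di) - 1) := by
      have h := congrArg (Di * ·) e7
      rwa [← mul_assoc Di D E₂, hDiD, one_mul] at h
    -- simplify (C+1)*(1-Ci) = C - Ci
    have e9 : (C + 1) * ((1 : Module.End ℝ V) - Ci) = C - Ci := by
      rw [add_mul, mul_sub, mul_sub, hCCi, mul_one, one_mul, one_mul]
      abel
    -- Di commutes with (1/2)•(C - Ci)
    have e10 : Di * (C - Ci) = (C - Ci) * Di := by
      rw [mul_sub, sub_mul, hDiC, hDiCi]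
    have e11 : (1 / 2 : ℝ) • (C + 1) * ((1 - Ci) * Di) = (1 / 2 : ℝ) • ((C - Ci) * Di) := by
      rw [smul_mul_assoc, ← mul_assoc, e9]
    have e12 : Di * Di * (C - Ci) = (C - Ci) * (Di * Di) := by
      calc Di * Di * (C - Ci) = Di * (Di * (C - Ci)) := mul_assoc _ _ _
        _ = Di * ((C - Ci) * Di) := by rw [e10]
        _ = (Di * (C - Ci)) * Di := (mul_assoc _ _ _).symm
        _ = ((C - Ci) * Di) * Di := by rw [e10]
        _ = (C - Ci) * (Di * Di) := mul_assoc _ _ _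
    rw [e8, hDD, e11, mul_sub, mul_one, mul_sub]
    congr 1
    · rw [mul_smul_comm, mul_smul_comm]
      congr 1
      calc Di * ((C - Ci) * Di) = (Di * (C - Ci)) * Di := (mul_assoc _ _ _).symm
        _ = ((C - Ci) * Di) * Di := by rw [e10]
        _ = (C - Ci) * (Di * Di) := mul_assoc _ _ _
        _ = Di * Di * (C - Ci) := e12.symm
    · rw [mul_assoc, hDiD, mul_one]
  exact ⟨goal1, goal2, goal3⟩
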